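/- The map Φ : (0,∞) × ℝ × ℂ → ℂ², Φ(ρ, φ, ζ) = ((1 − q)/(1 + q), √2 ζ/(1 + q)) with q = ρ + |ζ|²/2 − iφ, is a bijection onto the open unit ball {(z₁,z₂) ∈ ℂ² : |z₁|² + |z₂|² < 1}, with inverse given by ρ = (1 − |z₁|² − |z₂|²)/|1 + z₁|², φ = −Im((1 − z₁)/(1 + z₁)), ζ = √2 z₂/(1 + z₁). -/

import Mathlib

open Complex

/-- The coordinate change from the universal hypermultiplet coordinates to ball coordinates. -/
noncomputable def Phi (p : ℝ × ℝ × ℂ) : ℂ × ℂ :=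
  let q : ℂ := (p.1 : ℂ) + (‖p.2.2‖^2 / 2 : ℝ) - Complex.I * (p.2.1 : ℂ)
  ((1 - q) / (1 + q), (Real.sqrt 2 : ℂ) * p.2.2 / (1 + q))

/-- The inverse coordinate change. -/
noncomputable def PhiInv (z : ℂ × ℂ) : ℝ × ℝ × ℂ :=
  ((1 - ‖z.1‖^2 - ‖z.2‖^2) / ‖1 + z.1‖^2,
   -(((1 - z.1) / (1 + z.1)).im),
   (Real.sqrt 2 : ℂ) * z.2 / (1 + z.1))

noncomputable def Qc (p : ℝ × ℝ × ℂ) : ℂ :=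
  (p.1 : ℂ) + (‖p.2.2‖^2 / 2 : ℝ) - Complex.I * (p.2.1 : ℂ)

lemma Phi_eq (p : ℝ × ℝ × ℂ) :
    Phi p = ((1 - Qc p) / (1 + Qc p), (Real.sqrt 2 : ℂ) * p.2.2 / (1 + Qc p)) := rfl

lemma Qc_re (p : ℝ × ℝ × ℂ) : (Qc p).re = p.1 + ‖p.2.2‖^2 / 2 := by
  simp [Qc, ← Complex.ofReal_pow]

lemma Qc_im (p : ℝ × ℝ × ℂ) : (Qc p).im = -p.2.1 := by
  simp [Qc, ← Complex.ofReal_pow]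

lemma norm_sq_eq (z : ℂ) : ‖z‖^2 = normSq z := by
  rw [Complex.sq_norm]

lemma sqrt2_sq : ((Real.sqrt 2 : ℝ) : ℂ) * (Real.sqrt 2 : ℝ) = 2 := by
  norm_cast
  rw [Real.mul_self_sqrt (by norm_num)]

lemma sqrt2_sq' : ((Real.sqrt 2 : ℝ) : ℂ)^2 = 2 := by
  rw [sq, sqrt2_sq]

lemma Qc_ne (p : ℝ × ℝ × ℂ) (h : 0 < p.1) : 1 + Qc p ≠ 0 := by
  intro hc
  have h2 : (1 + Qc p).re = 0 := by rw [hc]; simp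
  rw [Complex.add_re, Complex.one_re, Qc_re] at h2
  have h3 : (0:ℝ) ≤ ‖p.2.2‖^2 := by positivity
  linarith

lemma norm_sq_decomp (z : ℂ) : ‖z‖^2 = z.re^2 + z.im^2 := by
  rw [norm_sq_eq, Complex.normSq_apply]; ring

lemma norm2_sqrt2_mul_div (w u : ℂ) :
    ‖(Real.sqrt 2 : ℂ) * w / u‖^2 = 2 * ‖w‖^2 / ‖u‖^2 := by
  rw [norm_div, div_pow, norm_mul, mul_pow, Complex.norm_real, Real.norm_eq_abs,
    _root_.sq_abs, Real.sq_sqrt (by norm_num)]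

lemma phi_mem (p : ℝ × ℝ × ℂ) (h : 0 < p.1) :
    ‖(Phi p).1‖^2 + ‖(Phi p).2‖^2 < 1 := by
  have hne := Qc_ne p h
  have hb : 0 < ‖1 + Qc p‖^2 := by
    have : 0 < ‖1 + Qc p‖ := norm_pos_iff.mpr hne
    positivity
  rw [Phi_eq]
  have e1 : ‖(1 - Qc p) / (1 + Qc p)‖^2 = ‖1 - Qc p‖^2 / ‖1 + Qc p‖^2 := by
    rw [norm_div, div_pow]
  simp only [e1, norm2_sqrt2_mul_div]
  rw [← add_div, div_lt_one hb]
  have hz : ‖p.2.2‖^2 = p.2.2.re^2 + p.2.2.im^2 := norm_sq_decomp _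
  rw [norm_sq_decomp (1 - Qc p), norm_sq_decomp (1 + Qc p)]
  simp only [Complex.sub_re, Complex.sub_im, Complex.add_re,
    Complex.add_im, Complex.one_re, Complex.one_im, Qc_re, Qc_im]
  nlinarith

lemma left_inv_aux (q zz : ℂ) (r f : ℝ) (hne : 1 + q ≠ 0)
    (hre : q.re = r + ‖zz‖^2/2) (him : q.im = -f) :
    PhiInv ((1 - q) / (1 + q), (Real.sqrt 2 : ℂ) * zz / (1 + q)) = (r, f, zz) := by
  have hb : 0 < ‖1 + q‖^2 := by
    have : 0 < ‖1 + q‖ := norm_pos_iff.mpr hne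
    positivity
  have h1 : (1:ℂ) + (1 - q) / (1 + q) = 2 / (1 + q) := by
    field_simp
    norm_num
  have h2 : (1:ℂ) - (1 - q) / (1 + q) = 2 * q / (1 + q) := by
    field_simp
    ring
  have e1 : ‖(1 - q) / (1 + q)‖^2 = ‖1 - q‖^2 / ‖1 + q‖^2 := by
    rw [norm_div, div_pow]
  have e3 : ‖(2:ℂ) / (1 + q)‖^2 = 4 / ‖1 + q‖^2 := by
    rw [norm_div, div_pow]
    norm_num
  have key : ‖1 + q‖^2 - ‖1 - q‖^2 - 2 * ‖zz‖^2 = 4 * r := by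
    have hz : ‖zz‖^2 = zz.re^2 + zz.im^2 := norm_sq_decomp _
    rw [norm_sq_decomp (1 - q), norm_sq_decomp (1 + q)]
    simp only [Complex.sub_re, Complex.sub_im, Complex.add_re,
      Complex.add_im, Complex.one_re, Complex.one_im]
    nlinarith
  have hq2 : 2 * q / (1 + q) / (2 / (1 + q)) = q := by
    field_simp
    try ring
  unfold PhiInv
  simp only [Prod.mk.injEq, h2, h1, hq2]
  refine ⟨?_, ?_, ?_⟩
  · simp only [e1, e3, norm2_sqrt2_mul_div]
    set B := ‖1 + q‖^2 with hB
    set A := ‖1 - q‖^2 with hA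
    set C := ‖zz‖^2 with hC
    field_simp
    linarith
  · rw [him]; ring
  · field_simp
    rw [sqrt2_sq']
    ring

lemma left_inv (p : ℝ × ℝ × ℂ) (h : 0 < p.1) : PhiInv (Phi p) = p := by
  obtain ⟨r, f, z⟩ := p
  have hne := Qc_ne (r, f, z) h
  rw [Phi_eq]
  exact left_inv_aux _ _ _ _ hne (Qc_re _) (Qc_im _)

lemma ball_ne (z : ℂ × ℂ) (h : ‖z.1‖^2 + ‖z.2‖^2 < 1) : 1 + z.1 ≠ 0 := by
  intro hc
  have hz : z.1 = -1 := by linear_combination hc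
  rw [hz] at h
  simp at h
  nlinarith [sq_nonneg ‖z.2‖]

lemma phiinv_mem (z : ℂ × ℂ) (h : ‖z.1‖^2 + ‖z.2‖^2 < 1) : 0 < (PhiInv z).1 := by
  have hne := ball_ne z h
  have hb : 0 < ‖1 + z.1‖^2 := by
    have : 0 < ‖1 + z.1‖ := norm_pos_iff.mpr hne
    positivity
  exact div_pos (by linarith) hb

lemma Q_phiinv (z : ℂ × ℂ) (h : ‖z.1‖^2 + ‖z.2‖^2 < 1) :
    Qc (PhiInv z) = (1 - z.1) / (1 + z.1) := by
  have hne := ball_ne z h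
  have hb : 0 < ‖1 + z.1‖^2 := by
    have : 0 < ‖1 + z.1‖ := norm_pos_iff.mpr hne
    positivity
  apply Complex.ext
  · have hre : ((1 - z.1) / (1 + z.1)).re = (1 - ‖z.1‖^2) / ‖1 + z.1‖^2 := by
      rw [Complex.div_re, norm_sq_eq (1 + z.1), ← add_div]
      congr 1
      rw [norm_sq_decomp]
      simp only [Complex.sub_re, Complex.sub_im, Complex.add_re, Complex.add_im,
        Complex.one_re, Complex.one_im]
      ring
    rw [Qc_re, hre]
    show (1 - ‖z.1‖^2 - ‖z.2‖^2) / ‖1 + z.1‖^2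
        + ‖(Real.sqrt 2 : ℂ) * z.2 / (1 + z.1)‖^2 / 2 = _
    rw [norm2_sqrt2_mul_div]
    field_simp
    ring
  · simp only [Qc_im, PhiInv, Complex.sub_im, Complex.ofReal_im,
      Complex.add_im, Complex.mul_im, Complex.I_re, Complex.I_im,
      Complex.ofReal_re]
    ring

lemma right_inv (z : ℂ × ℂ) (h : ‖z.1‖^2 + ‖z.2‖^2 < 1) : Phi (PhiInv z) = z := by
  have hne := ball_ne z h
  rw [Phi_eq, Q_phiinv z h]
  have h1 : (1:ℂ) + (1 - z.1) / (1 + z.1) = 2 / (1 + z.1) := by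
    field_simp
    norm_num
  have h2 : (1:ℂ) - (1 - z.1) / (1 + z.1) = 2 * z.1 / (1 + z.1) := by
    field_simp
    ring
  simp only [h1, h2, PhiInv]
  refine Prod.ext ?_ ?_
  · show 2 * z.1 / (1 + z.1) / (2 / (1 + z.1)) = z.1
    field_simp
    try ring
  · show (Real.sqrt 2 : ℂ) * ((Real.sqrt 2 : ℂ) * z.2 / (1 + z.1)) / (2 / (1 + z.1)) = z.2
    field_simp
    rw [sqrt2_sq']
    ring

theorem Phi_bijection :
    Set.BijOn Phi {p : ℝ × ℝ × ℂ | 0 < p.1}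
      {z : ℂ × ℂ | ‖z.1‖^2 + ‖z.2‖^2 < 1} ∧
    (∀ p ∈ {p : ℝ × ℝ × ℂ | 0 < p.1}, PhiInv (Phi p) = p) ∧
    (∀ z ∈ {z : ℂ × ℂ | ‖z.1‖^2 + ‖z.2‖^2 < 1}, Phi (PhiInv z) = z) := by
  refine ⟨?_, fun p hp => left_inv p hp, fun z hz => right_inv z hz⟩
  have inv : Set.InvOn PhiInv Phi {p : ℝ × ℝ × ℂ | 0 < p.1}
      {z : ℂ × ℂ | ‖z.1‖^2 + ‖z.2‖^2 < 1} :=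
    ⟨fun p hp => left_inv p hp, fun z hz => right_inv z hz⟩
  exact inv.bijOn (fun p hp => phi_mem p hp) (fun z hz => phiinv_mem z hz)
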